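/- arXiv:1010.0507 — 7 statements merged into one kernel-verified Lean document; each statement's English description precedes it below -/
import Mathlib

section
/- For real q with 0 < q < 1, x1, x2 in [0,1], natural n >= 1 and 0 <= k <= n-1, the partial derivative of B_{k,n}(x1,x2|q) with respect to x1 equals (log q / (q-1)) * q^{x1} * n * B_{k-1,n-1}(x1,x2|q), where B_{-1,n-1} is interpreted as 0 when k = 0. -/
noncomputable def qNum (q x : ℝ) : ℝ := (1 - q ^ x) / (1 - q)

noncomputable def qBern (q : ℝ) (k n : ℕ) (x1 x2 : ℝ) : ℝ :=
  (n.choose k : ℝ) * (qNum q x1) ^ k * (qNum q⁻¹ (1 - x2)) ^ (n - k)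

theorem qBern_deriv_x1 (q : ℝ) (hq0 : 0 < q) (hq1 : q < 1)
    (x1 x2 : ℝ) (hx1 : x1 ∈ Set.Icc (0:ℝ) 1) (hx2 : x2 ∈ Set.Icc (0:ℝ) 1)
    (n k : ℕ) (hn : 1 ≤ n) (hk : k ≤ n - 1) :
    HasDerivAt (fun t : ℝ => qBern q k n t x2)
      (Real.log q / (q - 1) * q ^ x1 * n *
        (if k = 0 then 0 else qBern q (k - 1) (n - 1) x1 x2)) x1 := by
  have hexp : HasDerivAt (fun t : ℝ => q ^ t) (q ^ x1 * Real.log q) x1 :=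
    (Real.hasStrictDerivAt_const_rpow hq0 x1).hasDerivAt
  have hq1' : (1 : ℝ) - q ≠ 0 := by linarith
  have hq1'' : q - 1 ≠ 0 := by linarith
  have hqnum : HasDerivAt (fun t : ℝ => qNum q t)
      (Real.log q / (q - 1) * q ^ x1) x1 := by
    have h1 := ((hasDerivAt_const x1 (1:ℝ)).sub hexp).div_const (1 - q)
    unfold qNum
    convert h1 using 1
    · rfl
    · rfl
    · rfl
    field_simp
    ring
  rcases Nat.eq_zero_or_pos k with hk0 | hkpos
  · subst hk0
    have hfun : (fun t : ℝ => qBern q 0 n t x2)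
        = fun _ : ℝ => (n.choose 0 : ℝ) * (qNum q⁻¹ (1 - x2)) ^ (n - 0) := by
      funext t; simp [qBern]
    rw [hfun]
    simpa using hasDerivAt_const x1 ((n.choose 0 : ℝ) * (qNum q⁻¹ (1 - x2)) ^ (n - 0))
  · have hkne : k ≠ 0 := hkpos.ne'
    rw [if_neg hkne]
    have hpow : HasDerivAt (fun t : ℝ => (qNum q t) ^ k)
        ((k : ℝ) * (qNum q x1) ^ (k - 1) * (Real.log q / (q - 1) * q ^ x1)) x1 :=
      hqnum.pow k
    have hfun : (fun t : ℝ => qBern q k n t x2)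
        = fun t : ℝ => (n.choose k : ℝ) * (qNum q t) ^ k * (qNum q⁻¹ (1 - x2)) ^ (n - k) := by
      funext t; simp [qBern, mul_assoc]
    have h2 : HasDerivAt (fun t : ℝ => qBern q k n t x2)
        ((n.choose k : ℝ) * ((k : ℝ) * (qNum q x1) ^ (k - 1) *
          (Real.log q / (q - 1) * q ^ x1)) * (qNum q⁻¹ (1 - x2)) ^ (n - k)) x1 := by
      rw [hfun]
      exact (hpow.const_mul _).mul_const _
    convert h2 using 1
    unfold qBern
    have hsub : n - 1 - (k - 1) = n - k := by omega
    have hchn : n * (n - 1).choose (k - 1) = k * n.choose k := by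
      have h := Nat.add_one_mul_choose_eq (n - 1) (k - 1)
      have hn' : n - 1 + 1 = n := by omega
      have hk' : k - 1 + 1 = k := by omega
      rw [hn', hk'] at h
      rw [h]; ring
    have hch : (n : ℝ) * ((n - 1).choose (k - 1) : ℝ) = (k : ℝ) * (n.choose k : ℝ) := by
      exact_mod_cast hchn
    rw [hsub]
    linear_combination (Real.log q / (q - 1) * q ^ x1 * (qNum q x1) ^ (k - 1) *
      (qNum q⁻¹ (1 - x2)) ^ (n - k)) * hch
end

section
/- For real q with 0 < q < 1, x1, x2 in [0,1], natural n >= 1 and 0 <= k <= n, the partial derivative of B_{k,n}(x1,x2|q) with respect to x2 equals (log q / (1-q)) * q^{x2} * n * B_{k,n-1}(x1,x2|q), where B_{k,n-1} = 0 if k > n-1. -/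
lemma qNum_deriv_aux (q : ℝ) (hq0 : 0 < q) (hq1 : q < 1) (x2 : ℝ) :
    HasDerivAt (fun t : ℝ => qNum q⁻¹ (1 - t)) (Real.log q / (1 - q) * q ^ x2) x2 := by
  have hb : (0:ℝ) < q⁻¹ := by positivity
  have h1 : HasDerivAt (fun t : ℝ => (1:ℝ) - t) (-1) x2 := by
    simpa using (hasDerivAt_id x2).const_sub 1
  have h2 : HasDerivAt (fun t : ℝ => q⁻¹ ^ t) (q⁻¹ ^ (1 - x2) * Real.log q⁻¹) (1 - x2) :=
    (Real.hasStrictDerivAt_const_rpow hb (1 - x2)).hasDerivAt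
  have h3 := h2.comp x2 h1
  have h4 : HasDerivAt (fun t : ℝ => (1 - q⁻¹ ^ (1 - t)) / (1 - q⁻¹))
      ((0 - q⁻¹ ^ (1 - x2) * Real.log q⁻¹ * -1) / (1 - q⁻¹)) x2 :=
    ((hasDerivAt_const x2 (1:ℝ)).sub h3).div_const _
  convert h4 using 1
  · rfl
  rw [Real.log_inv, Real.inv_rpow hq0.le, Real.rpow_sub hq0, Real.rpow_one]
  have hq1' : (1:ℝ) - q ≠ 0 := by linarith
  have hx : (q:ℝ) ^ x2 ≠ 0 := (Real.rpow_pos_of_pos hq0 _).ne'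
  have hq : q ≠ 0 := hq0.ne'
  have h5 : -q + q ^ 2 ≠ 0 := by
    intro h; nlinarith [mul_pos hq0 (show (0:ℝ) < 1 - q by linarith)]
  field_simp
  have hq2 : q - 1 ≠ 0 := by linarith
  rw [eq_div_iff hq2]; ring

theorem qBern_deriv_x2 (q : ℝ) (hq0 : 0 < q) (hq1 : q < 1)
    (x1 x2 : ℝ) (hx1 : x1 ∈ Set.Icc (0:ℝ) 1) (hx2 : x2 ∈ Set.Icc (0:ℝ) 1)
    (n k : ℕ) (hn : 1 ≤ n) (hk : k ≤ n) :
    HasDerivAt (fun t : ℝ => qBern q k n x1 t)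
      (Real.log q / (1 - q) * q ^ x2 * n * qBern q k (n - 1) x1 x2) x2 := by
  set A : ℝ := qNum q x1 with hA
  set D : ℝ := Real.log q / (1 - q) * q ^ x2 with hD
  have hg := qNum_deriv_aux q hq0 hq1 x2
  set g : ℝ → ℝ := fun t => qNum q⁻¹ (1 - t) with hgdef
  have h0 : HasDerivAt (fun t : ℝ => ((n.choose k : ℝ) * A ^ k) * g t ^ (n - k))
      (((n.choose k : ℝ) * A ^ k) * (((n - k : ℕ) : ℝ) * g x2 ^ (n - k - 1) * D)) x2 :=
    (hg.pow (n - k)).const_mul _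
  have hfun : (fun t : ℝ => qBern q k n x1 t)
      = fun t : ℝ => ((n.choose k : ℝ) * A ^ k) * g t ^ (n - k) := by
    funext t; simp [qBern, mul_assoc, hA, hgdef]
  rw [hfun]
  convert h0 using 1
  unfold qBern
  rcases eq_or_lt_of_le hk with rfl | hkn
  · have : (k - 1).choose k = 0 := Nat.choose_eq_zero_of_lt (by omega)
    simp [this]
  · have h1 : n - k - 1 = (n - 1) - k := by omega
    have h2nat : n.choose k * (n - k) = n * ((n - 1).choose k) := by
      have h := Nat.choose_mul_succ_eq (n - 1) k
      have hn1 : n - 1 + 1 = n := by omega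
      rw [hn1] at h
      rw [← h]; ring
    have h2 : ((n.choose k : ℝ)) * ((n - k : ℕ) : ℝ) = (n : ℝ) * ((n - 1).choose k) := by
      exact_mod_cast congrArg (Nat.cast : ℕ → ℝ) h2nat
    rw [h1]
    show D * (n : ℝ) * (((n - 1).choose k : ℝ) * A ^ k * g x2 ^ (n - 1 - k)) = _
    linear_combination (-(A ^ k * g x2 ^ (n - 1 - k) * D)) * h2
end

section
/- For real q with 0 < q < 1, x1, x2 in [0,1], and natural n >= 1, the sum over k from 0 to n of (k/n) * B_{k,n}(x1,x2|q) equals [x1]_q * (1 + [x1]_q - [x2]_q)^{n-1}. -/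
lemma aux_sum (a b : ℝ) (m : ℕ) :
    ∑ k ∈ Finset.range (m + 2),
      ((k : ℝ) / (m + 1)) * (((m+1).choose k : ℝ) * a ^ k * b ^ (m + 1 - k))
      = a * (a + b) ^ m := by
  rw [Finset.sum_range_succ']
  simp only [Nat.cast_zero, zero_div, zero_mul, add_zero]
  rw [add_pow, Finset.mul_sum]
  refine Finset.sum_congr rfl fun i hi => ?_
  have hcN : (m + 1) * m.choose i = (m + 1).choose (i + 1) * (i + 1) :=
    Nat.add_one_mul_choose_eq m i
  have hchoose : ((m : ℝ) + 1) * (m.choose i : ℝ) = ((m + 1).choose (i + 1) : ℝ) * ((i : ℝ) + 1) := by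
    exact_mod_cast hcN
  have hm : ((m : ℝ) + 1) ≠ 0 := by positivity
  have hsub : m + 1 - (i + 1) = m - i := by omega
  rw [hsub]
  push_cast
  rw [div_mul_eq_mul_div, div_eq_iff hm]
  linear_combination (-(a ^ (i + 1) * b ^ (m - i))) * hchoose

theorem qBern_sum_linear (q : ℝ) (hq0 : 0 < q) (hq1 : q < 1)
    (x1 x2 : ℝ) (hx1 : x1 ∈ Set.Icc (0:ℝ) 1) (hx2 : x2 ∈ Set.Icc (0:ℝ) 1)
    (n : ℕ) (hn : 1 ≤ n) :
    ∑ k ∈ Finset.range (n + 1), ((k : ℝ) / n) * qBern q k n x1 x2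
      = qNum q x1 * (1 + qNum q x1 - qNum q x2) ^ (n - 1) := by
  have hq1' : (1 : ℝ) - q ≠ 0 := by linarith
  have hqne : q ≠ 0 := ne_of_gt hq0
  have hb : qNum q⁻¹ (1 - x2) = 1 - qNum q x2 := by
    unfold qNum
    have h1 : (q⁻¹ : ℝ) ^ (1 - x2) = q ^ (x2 - 1) := by
      rw [Real.inv_rpow hq0.le, ← Real.rpow_neg hq0.le]
      ring_nf
    have h2 : q ^ (x2 - 1) = q ^ x2 / q := by
      rw [Real.rpow_sub hq0, Real.rpow_one]
    rw [h1, h2]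
    have hinv : (1 : ℝ) - q⁻¹ = (q - 1) / q := by field_simp
    rw [hinv]
    have hne : q - 1 ≠ 0 := by intro h; apply hq1'; linarith
    set t := q ^ x2 with ht
    field_simp
    ring
  obtain ⟨m, rfl⟩ : ∃ m, n = m + 1 := ⟨n - 1, by omega⟩
  have key : ∀ k, qBern q k (m+1) x1 x2
      = ((m+1).choose k : ℝ) * (qNum q x1) ^ k * (1 - qNum q x2) ^ (m + 1 - k) := by
    intro k; rw [qBern, hb]
  simp only [key]
  have : (1 : ℝ) + qNum q x1 - qNum q x2 = qNum q x1 + (1 - qNum q x2) := by ring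
  rw [this]
  simpa using aux_sum (qNum q x1) (1 - qNum q x2) m
end

section
/- For real q with 0 < q < 1, x1, x2 in [0,1], and natural n >= 2, the sum over k from 0 to n of (k/n)^2 * B_{k,n}(x1,x2|q) equals ((n-1)/n) * [x1]_q^2 * (1+[x1]_q-[x2]_q)^{n-2} + ([x1]_q/n) * (1+[x1]_q-[x2]_q)^{n-1}. -/
lemma qNum_inv (q : ℝ) (hq0 : 0 < q) (hq1 : q < 1) (x : ℝ) :
    qNum q⁻¹ (1 - x) = 1 - qNum q x := by
  have hq : q ≠ 0 := ne_of_gt hq0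
  have h1 : (1:ℝ) - q ≠ 0 := by linarith
  have hgt : (1:ℝ) < q⁻¹ := (one_lt_inv₀ hq0).mpr hq1
  have h1q : (1:ℝ) - q⁻¹ ≠ 0 := by linarith
  have hp : q⁻¹ ^ (1 - x) = q ^ x / q := by
    rw [Real.inv_rpow hq0.le, Real.rpow_sub hq0, Real.rpow_one, inv_div]
  rw [qNum, qNum, hp]
  rw [div_eq_iff h1q, inv_eq_one_div]
  field_simp
  ring


lemma sum_k (a b : ℝ) : ∀ n : ℕ,
    ∑ k ∈ Finset.range (n+1), (k : ℝ) * (n.choose k) * a ^ k * b ^ (n - k)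
      = n * a * (a + b) ^ (n - 1) := by
  intro n
  cases n with
  | zero => simp
  | succ m =>
    rw [Finset.sum_range_succ']
    have hc : ∀ k : ℕ, ((k:ℝ)+1) * ((m+1).choose (k+1)) = ((m:ℝ)+1) * (m.choose k) := by
      intro k
      have h := Nat.add_one_mul_choose_eq m k
      have h2 : (((m+1) * m.choose k : ℕ) : ℝ) = (((m+1).choose (k+1) * (k+1) : ℕ) : ℝ) := by
        exact_mod_cast congrArg (Nat.cast (R := ℝ)) h
      push_cast at h2
      linarith
    have : ∀ k ∈ Finset.range (m+1),
        ((k+1 : ℕ) : ℝ) * ((m+1).choose (k+1)) * a ^ (k+1) * b ^ (m+1 - (k+1))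
          = ((m:ℝ)+1) * a * ((m.choose k) * a ^ k * b ^ (m-k)) := by
      intro k _
      push_cast
      linear_combination (a ^ (k+1) * b ^ (m-k)) * hc k
    rw [Finset.sum_congr rfl this, ← Finset.mul_sum]
    simp only [Nat.cast_zero, zero_mul, add_zero, Nat.succ_sub_one]
    rw [add_pow]
    push_cast
    congr 1
    apply Finset.sum_congr rfl
    intro k _; ring

lemma sum_kk (a b : ℝ) : ∀ n : ℕ,
    ∑ k ∈ Finset.range (n+1), ((k : ℝ) * ((k:ℝ) - 1)) * (n.choose k) * a ^ k * b ^ (n - k)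
      = n * ((n:ℝ) - 1) * a ^ 2 * (a + b) ^ (n - 2) := by
  intro n
  cases n with
  | zero => simp
  | succ m =>
    rw [Finset.sum_range_succ']
    have hc : ∀ k : ℕ, ((k:ℝ)+1) * ((m+1).choose (k+1)) = ((m:ℝ)+1) * (m.choose k) := by
      intro k
      have h := Nat.add_one_mul_choose_eq m k
      have h2 : (((m+1) * m.choose k : ℕ) : ℝ) = (((m+1).choose (k+1) * (k+1) : ℕ) : ℝ) := by
        exact_mod_cast congrArg (Nat.cast (R := ℝ)) h
      push_cast at h2
      linarith
    have : ∀ k ∈ Finset.range (m+1),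
        (((k+1 : ℕ) : ℝ) * (((k+1:ℕ):ℝ) - 1)) * ((m+1).choose (k+1)) * a ^ (k+1) * b ^ (m+1 - (k+1))
          = ((m:ℝ)+1) * a * ((k:ℝ) * (m.choose k) * a ^ k * b ^ (m-k)) := by
      intro k _
      push_cast
      linear_combination ((k:ℝ) * a ^ (k+1) * b ^ (m-k)) * hc k
    rw [Finset.sum_congr rfl this, ← Finset.mul_sum]
    simp only [Nat.cast_zero, zero_mul, add_zero, mul_zero]
    rw [sum_k a b m]
    push_cast
    ring

theorem qBern_sum_square (q : ℝ) (hq0 : 0 < q) (hq1 : q < 1)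
    (x1 x2 : ℝ) (hx1 : x1 ∈ Set.Icc (0:ℝ) 1) (hx2 : x2 ∈ Set.Icc (0:ℝ) 1)
    (n : ℕ) (hn : 2 ≤ n) :
    ∑ k ∈ Finset.range (n + 1), ((k : ℝ) / n) ^ 2 * qBern q k n x1 x2
      = (((n : ℝ) - 1) / n) * (qNum q x1) ^ 2 * (1 + qNum q x1 - qNum q x2) ^ (n - 2)
        + (qNum q x1 / n) * (1 + qNum q x1 - qNum q x2) ^ (n - 1) := by
  have hb : qNum q⁻¹ (1 - x2) = 1 - qNum q x2 := qNum_inv q hq0 hq1 x2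
  set a := qNum q x1 with ha
  set c := qNum q x2 with hc
  have hn0 : (n:ℝ) ≠ 0 := by positivity
  have key : ∑ k ∈ Finset.range (n + 1), ((k : ℝ) / n) ^ 2 * qBern q k n x1 x2
      = (1/(n:ℝ)^2) *
        ((∑ k ∈ Finset.range (n+1), ((k : ℝ) * ((k:ℝ) - 1)) * (n.choose k) * a ^ k * (1-c) ^ (n - k))
          + ∑ k ∈ Finset.range (n+1), (k : ℝ) * (n.choose k) * a ^ k * (1-c) ^ (n - k)) := by
    rw [← Finset.sum_add_distrib, Finset.mul_sum]
    apply Finset.sum_congr rfl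
    intro k _
    rw [qBern, hb]
    ring
  rw [key, sum_kk, sum_k]
  have hs : a + (1 - c) = 1 + a - c := by ring
  rw [hs]
  field_simp
end

section
/- For real q with 0 < q < 1, x1, x2 in [0,1], naturals j <= n with 1 + [x1]_q - [x2]_q nonzero, we have (1/(1+[x1]_q-[x2]_q)^{n-j}) * sum over k from j to n of (C(k,j)/C(n,j)) * B_{k,n}(x1,x2|q) = [x1]_q^j. -/
lemma key_sum (a b : ℝ) (n j : ℕ) (hjn : j ≤ n) :
    ∑ k ∈ Finset.Icc j n, ((k.choose j : ℝ) / (n.choose j : ℝ)) *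
      ((n.choose k : ℝ) * a ^ k * b ^ (n - k)) = a ^ j * (a + b) ^ (n - j) := by
  have hnj : (n.choose j : ℝ) ≠ 0 := by
    exact_mod_cast (Nat.choose_pos hjn).ne'
  rw [← Finset.Ico_add_one_right_eq_Icc, Finset.sum_Ico_eq_sum_range]
  have hrange : n + 1 - j = n - j + 1 := by omega
  rw [hrange]
  have : ∀ i ∈ Finset.range (n - j + 1),
      (((j + i).choose j : ℝ) / (n.choose j : ℝ)) *
        ((n.choose (j + i) : ℝ) * a ^ (j + i) * b ^ (n - (j + i)))
      = a ^ j * (((n - j).choose i : ℝ) * a ^ i * b ^ ((n - j) - i)) := by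
    intro i hi
    simp only [Finset.mem_range] at hi
    have hkn : j + i ≤ n := by omega
    have hchoose : (n.choose (j + i) : ℝ) * ((j + i).choose j : ℝ)
        = (n.choose j : ℝ) * ((n - j).choose ((j + i) - j) : ℝ) := by
      exact_mod_cast congrArg Nat.cast (Nat.choose_mul (n := n) (Nat.le_add_right j i))
    have h1 : (j + i) - j = i := by omega
    have h2 : n - (j + i) = (n - j) - i := by omega
    rw [h1] at hchoose
    rw [h2, pow_add]
    field_simp
    linear_combination a ^ j * a ^ i * b ^ ((n - j) - i) * hchoose
  rw [Finset.sum_congr rfl this, ← Finset.mul_sum]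
  congr 1
  rw [add_pow]
  apply Finset.sum_congr rfl
  intro i hi
  ring

theorem qBern_moment (q : ℝ) (hq0 : 0 < q) (hq1 : q < 1)
    (x1 x2 : ℝ) (hx1 : x1 ∈ Set.Icc (0:ℝ) 1) (hx2 : x2 ∈ Set.Icc (0:ℝ) 1)
    (n j : ℕ) (hjn : j ≤ n) (h : 1 + qNum q x1 - qNum q x2 ≠ 0) :
    (1 / (1 + qNum q x1 - qNum q x2) ^ (n - j)) *
      ∑ k ∈ Finset.Icc j n, ((k.choose j : ℝ) / (n.choose j : ℝ)) * qBern q k n x1 x2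
      = (qNum q x1) ^ j := by
  have hb : qNum q⁻¹ (1 - x2) = 1 - qNum q x2 := qNum_inv q hq0 hq1 x2
  have hsum := key_sum (qNum q x1) (1 - qNum q x2) n j hjn
  simp only [qBern, hb]
  rw [hsum]
  have hab : qNum q x1 + (1 - qNum q x2) = 1 + qNum q x1 - qNum q x2 := by ring
  rw [hab]
  field_simp
end

section
/- Let p be a prime and q in C_p with |1-q|_p < 1, q^n != 1 for n >= 1. For all naturals n, the bosonic p-adic q-integral satisfies: integral over Z_p of [1-x+x1]_{q^{-1}}^n d mu_{q^{-1}}(x1) = (-1)^n q^n * integral over Z_p of [x+x1]_q^n d mu_q(x1). -/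
/-- The q-number [m]_q = (1 - q^m)/(1 - q) for q in the p-adic numbers and integer m. -/
noncomputable def qNumZ (p : ℕ) [Fact p.Prime] (q : ℚ_[p]) (m : ℤ) : ℚ_[p] :=
  (1 - q ^ m) / (1 - q)

/-- `IsPadicQIntegral p q f I` says the bosonic p-adic q-integral
`I_q(f) = lim_N (1/[p^N]_q) ∑_{x=0}^{p^N-1} f(x) q^x` exists and equals `I`. -/
def IsPadicQIntegral (p : ℕ) [Fact p.Prime] (q : ℚ_[p]) (f : ℕ → ℚ_[p]) (I : ℚ_[p]) : Prop :=
  Filter.Tendsto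
    (fun N : ℕ => (∑ x ∈ Finset.range (p ^ N), f x * q ^ x) / qNumZ p q ((p : ℤ) ^ N))
    Filter.atTop (nhds I)

open Filter Finset

section Aux
variable {p : ℕ} [Fact p.Prime]

lemma aux_norm_one {Q : ℚ_[p]} (hQ : ‖1 - Q‖ < 1) : ‖Q‖ = 1 := by
  have h : Q = 1 + (Q - 1) := by ring
  rw [h, IsUltrametricDist.norm_add_eq_max_of_norm_ne_norm, norm_one]
  · rw [max_eq_left]
    rw [norm_sub_rev]; exact hQ.le
  · rw [norm_one, norm_sub_rev]; exact hQ.ne'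

lemma aux_pow_sub_one_le {Q : ℚ_[p]} (hQ : ‖1 - Q‖ < 1) (j : ℕ) :
    ‖Q ^ j - 1‖ ≤ ‖Q - 1‖ := by
  have h1 : ‖Q‖ = 1 := aux_norm_one hQ
  have h : Q ^ j - 1 = (∑ i ∈ range j, Q ^ i) * (Q - 1) := (geom_sum_mul Q j).symm
  rw [h, norm_mul]
  have : ‖∑ i ∈ range j, Q ^ i‖ ≤ 1 := by
    apply IsUltrametricDist.norm_sum_le_of_forall_le_of_nonneg zero_le_one
    intro i _
    rw [norm_pow, h1, one_pow]
  nlinarith [norm_nonneg (Q - 1)]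

lemma aux_step {Q : ℚ_[p]} (hQ : ‖1 - Q‖ < 1) :
    ‖Q ^ p - 1‖ ≤ max ‖Q - 1‖ ((p : ℝ)⁻¹) * ‖Q - 1‖ := by
  have h1 : ‖Q‖ = 1 := aux_norm_one hQ
  have h : Q ^ p - 1 = (∑ i ∈ range p, Q ^ i) * (Q - 1) := (geom_sum_mul Q p).symm
  rw [h, norm_mul]
  have hs : (∑ i ∈ range p, Q ^ i) = (∑ i ∈ range p, (Q ^ i - 1)) + p := by
    rw [Finset.sum_sub_distrib]
    simp
  have hb : ‖∑ i ∈ range p, Q ^ i‖ ≤ max ‖Q - 1‖ ((p : ℝ)⁻¹) := by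
    rw [hs]
    refine (IsUltrametricDist.norm_add_le_max _ _).trans (max_le_max ?_ ?_)
    · apply IsUltrametricDist.norm_sum_le_of_forall_le_of_nonneg (norm_nonneg _)
      intro i _; exact aux_pow_sub_one_le hQ i
    · exact le_of_eq Padic.norm_p
  exact mul_le_mul_of_nonneg_right hb (norm_nonneg _)

lemma aux_root {Q : ℚ_[p]} (hQ : ‖1 - Q‖ < 1) :
    Tendsto (fun N : ℕ => Q ^ (p ^ N)) atTop (nhds 1) := by
  set c : ℝ := max ‖Q - 1‖ ((p : ℝ)⁻¹) with hc
  have hp1 : 1 < (p : ℝ) := by exact_mod_cast (Fact.out : p.Prime).one_lt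
  have hc0 : 0 ≤ c := le_max_of_le_right (by positivity)
  have hc1 : c < 1 := by
    apply max_lt
    · rwa [norm_sub_rev]
    · rw [inv_lt_one_iff₀]; right; exact hp1
  have key : ∀ N : ℕ, ‖Q ^ (p ^ N) - 1‖ ≤ c ^ N * ‖Q - 1‖ := by
    intro N
    induction N with
    | zero => simp
    | succ N ih =>
      have hlt : ‖1 - Q ^ (p ^ N)‖ < 1 := by
        rw [norm_sub_rev]
        calc ‖Q ^ (p ^ N) - 1‖ ≤ c ^ N * ‖Q - 1‖ := ih
          _ ≤ 1 * ‖Q - 1‖ := by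
              apply mul_le_mul_of_nonneg_right _ (norm_nonneg _)
              exact pow_le_one₀ hc0 hc1.le
          _ < 1 := by rw [one_mul, norm_sub_rev]; exact hQ
      have hstep := aux_step hlt
      have hpow : Q ^ (p ^ (N + 1)) = (Q ^ (p ^ N)) ^ p := by
        rw [← pow_mul, pow_succ]
      rw [hpow]
      calc ‖(Q ^ p ^ N) ^ p - 1‖ ≤ max ‖Q ^ p ^ N - 1‖ ((p:ℝ)⁻¹) * ‖Q ^ p ^ N - 1‖ := hstep
        _ ≤ c * (c ^ N * ‖Q - 1‖) := by
            apply mul_le_mul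
            · apply max_le_max _ le_rfl
              calc ‖Q ^ p ^ N - 1‖ ≤ c ^ N * ‖Q - 1‖ := ih
                _ ≤ 1 * ‖Q - 1‖ := mul_le_mul_of_nonneg_right (pow_le_one₀ hc0 hc1.le) (norm_nonneg _)
                _ = ‖Q - 1‖ := one_mul _
            · exact ih
            · exact norm_nonneg _
            · exact hc0
        _ = c ^ (N + 1) * ‖Q - 1‖ := by ring
  rw [tendsto_iff_norm_sub_tendsto_zero]
  apply squeeze_zero (fun N => norm_nonneg _) key
  rw [show (0:ℝ) = 0 * ‖Q - 1‖ by ring]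
  exact (tendsto_pow_atTop_nhds_zero_of_lt_one hc0 hc1).mul_const _

/-- coefficient in the closed form of the integral -/
noncomputable def auxC (Q : ℚ_[p]) (a : ℤ) (n k : ℕ) : ℚ_[p] :=
  (n.choose k : ℚ_[p]) * (-1) ^ (k + 1) * Q ^ (a * (k : ℤ)) * (1 - Q) /
    ((1 - Q) ^ n * (Q ^ (k + 1) - 1))

lemma aux_key (Q : ℚ_[p]) (hQ0 : Q ≠ 0) (hQ' : ∀ m : ℕ, 1 ≤ m → Q ^ m ≠ 1)
    (a : ℤ) (n : ℕ) (N : ℕ) :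
    (∑ z ∈ Finset.range (p ^ N), (qNumZ p Q (a + z)) ^ n * Q ^ z) / qNumZ p Q ((p : ℤ) ^ N)
      = ∑ k ∈ Finset.range (n + 1), auxC Q a n k * (∑ j ∈ Finset.range (k + 1), (Q ^ (p ^ N)) ^ j) := by
  have hppos : 1 ≤ p ^ N := Nat.one_le_pow _ _ (Fact.out : p.Prime).pos
  have hQ1 : Q ≠ 1 := by
    intro h; exact hQ' 1 le_rfl (by rw [h, one_pow])
  have h1Q : (1 : ℚ_[p]) - Q ≠ 0 := sub_ne_zero.mpr (Ne.symm hQ1)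
  have hP : Q ^ (p ^ N) ≠ 1 := hQ' _ hppos
  have hPk : ∀ k : ℕ, Q ^ (k + 1) ≠ 1 := fun k => hQ' _ (Nat.succ_le_succ (Nat.zero_le _))
  -- rewrite the denominator exponent
  have hden : qNumZ p Q ((p : ℤ) ^ N) = (1 - Q ^ (p ^ N)) / (1 - Q) := by
    unfold qNumZ
    congr 2
    rw [show ((p : ℤ) ^ N) = ((p ^ N : ℕ) : ℤ) by push_cast; ring, zpow_natCast]
  rw [hden]
  -- expand each summand binomially
  have hz : ∀ z : ℕ, (qNumZ p Q (a + z)) ^ n * Q ^ z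
      = ∑ k ∈ Finset.range (n + 1),
          (n.choose k : ℚ_[p]) * (-1) ^ k * Q ^ (a * (k : ℤ)) * (Q ^ (k + 1)) ^ z / (1 - Q) ^ n := by
    intro z
    unfold qNumZ
    rw [div_pow]
    have hb : (1 - Q ^ (a + (z : ℤ))) ^ n
        = ∑ k ∈ Finset.range (n + 1), (-(Q ^ (a + (z : ℤ)))) ^ k * (n.choose k : ℚ_[p]) := by
      have := add_pow (-(Q ^ (a + (z : ℤ)))) 1 n
      simpa [neg_add_eq_sub] using this
    rw [hb, Finset.sum_div, Finset.sum_mul]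
    refine Finset.sum_congr rfl fun k _ => ?_
    have hpow : (Q ^ (a + (z : ℤ))) ^ k * Q ^ z = Q ^ (a * (k : ℤ)) * (Q ^ (k + 1)) ^ z := by
      rw [← zpow_natCast (Q ^ (a + (z : ℤ))) k, ← zpow_mul,
        ← zpow_natCast Q z, ← zpow_add₀ hQ0,
        ← zpow_natCast (Q ^ (k + 1)) z, ← zpow_natCast Q (k + 1), ← zpow_mul,
        ← zpow_add₀ hQ0]
      congr 1
      push_cast
      ring
    rw [neg_pow]
    field_simp
    linear_combination (n.choose k : ℚ_[p]) * hpow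
  calc (∑ z ∈ Finset.range (p ^ N), (qNumZ p Q (a + z)) ^ n * Q ^ z) / ((1 - Q ^ (p ^ N)) / (1 - Q))
      = (∑ z ∈ Finset.range (p ^ N), ∑ k ∈ Finset.range (n + 1),
          (n.choose k : ℚ_[p]) * (-1) ^ k * Q ^ (a * (k : ℤ)) * (Q ^ (k + 1)) ^ z / (1 - Q) ^ n)
          / ((1 - Q ^ (p ^ N)) / (1 - Q)) := by
        rw [Finset.sum_congr rfl fun z _ => hz z]
    _ = (∑ k ∈ Finset.range (n + 1),
          (n.choose k : ℚ_[p]) * (-1) ^ k * Q ^ (a * (k : ℤ))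
            * (((Q ^ (p ^ N)) ^ (k + 1) - 1) / (Q ^ (k + 1) - 1)) / (1 - Q) ^ n)
          / ((1 - Q ^ (p ^ N)) / (1 - Q)) := by
        rw [Finset.sum_comm]
        congr 1
        refine Finset.sum_congr rfl fun k _ => ?_
        rw [← Finset.sum_div, ← Finset.mul_sum, geom_sum_eq (hPk k), ← pow_mul, mul_comm (k+1) (p ^ N), pow_mul]
    _ = ∑ k ∈ Finset.range (n + 1), auxC Q a n k * (∑ j ∈ Finset.range (k + 1), (Q ^ (p ^ N)) ^ j) := by
        rw [Finset.sum_div]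
        refine Finset.sum_congr rfl fun k _ => ?_
        rw [geom_sum_eq hP (k + 1)]
        unfold auxC
        have h2 : Q ^ (k + 1) - 1 ≠ 0 := sub_ne_zero.mpr (hPk k)
        have h3 : Q ^ (p ^ N) - 1 ≠ 0 := sub_ne_zero.mpr hP
        have h4 : (1:ℚ_[p]) - Q ^ (p ^ N) ≠ 0 := sub_ne_zero.mpr (Ne.symm hP)
        field_simp
        ring


lemma aux_limit (Q : ℚ_[p]) (hQ : ‖(1:ℚ_[p]) - Q‖ < 1) (hQ' : ∀ m : ℕ, 1 ≤ m → Q ^ m ≠ 1)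
    (a : ℤ) (n : ℕ) (J : ℚ_[p])
    (hJ : IsPadicQIntegral p Q (fun x1 : ℕ => (qNumZ p Q (a + x1)) ^ n) J) :
    J = ∑ k ∈ Finset.range (n + 1), auxC Q a n k * ((k : ℚ_[p]) + 1) := by
  have hQ0 : Q ≠ 0 := by
    intro h
    rw [h, sub_zero, norm_one] at hQ
    exact lt_irrefl _ hQ
  have hT : Filter.Tendsto
      (fun N : ℕ => (∑ x ∈ Finset.range (p ^ N), (qNumZ p Q (a + x)) ^ n * Q ^ x) / qNumZ p Q ((p : ℤ) ^ N))
      Filter.atTop (nhds (∑ k ∈ Finset.range (n + 1), auxC Q a n k * ((k : ℚ_[p]) + 1))) := by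
    have heq : ∀ N : ℕ,
        (∑ x ∈ Finset.range (p ^ N), (qNumZ p Q (a + x)) ^ n * Q ^ x) / qNumZ p Q ((p : ℤ) ^ N)
          = ∑ k ∈ Finset.range (n + 1), auxC Q a n k * (∑ j ∈ Finset.range (k + 1), (Q ^ (p ^ N)) ^ j) :=
      aux_key Q hQ0 hQ' a n
    rw [show (fun N : ℕ => (∑ x ∈ Finset.range (p ^ N), (qNumZ p Q (a + x)) ^ n * Q ^ x) / qNumZ p Q ((p : ℤ) ^ N))
        = fun N : ℕ => ∑ k ∈ Finset.range (n + 1), auxC Q a n k * (∑ j ∈ Finset.range (k + 1), (Q ^ (p ^ N)) ^ j)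
      from funext heq]
    apply tendsto_finset_sum
    intro k _
    have hg : Filter.Tendsto (fun N : ℕ => ∑ j ∈ Finset.range (k + 1), (Q ^ (p ^ N)) ^ j)
        Filter.atTop (nhds ((k : ℚ_[p]) + 1)) := by
      have h2 : Filter.Tendsto (fun N : ℕ => ∑ j ∈ Finset.range (k + 1), (Q ^ (p ^ N)) ^ j)
          Filter.atTop (nhds (∑ j ∈ Finset.range (k + 1), (1:ℚ_[p]) ^ j)) := by
        apply tendsto_finset_sum
        intro j _
        exact (aux_root hQ).pow j
      simpa using h2
    exact (tendsto_const_nhds.mul hg)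
  exact tendsto_nhds_unique hJ hT

end Aux

theorem padic_integral_reflection (p : ℕ) [Fact p.Prime] (q : ℚ_[p])
    (hq : ‖1 - q‖ < 1) (hq' : ∀ m : ℕ, 1 ≤ m → q ^ m ≠ 1)
    (x : ℤ) (n : ℕ) (I1 I2 : ℚ_[p])
    (h1 : IsPadicQIntegral p q⁻¹ (fun x1 : ℕ => (qNumZ p q⁻¹ (1 - x + x1)) ^ n) I1)
    (h2 : IsPadicQIntegral p q (fun x1 : ℕ => (qNumZ p q (x + x1)) ^ n) I2) :
    I1 = (-1 : ℚ_[p]) ^ n * q ^ n * I2 := by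
  have hq0 : q ≠ 0 := by
    intro h; rw [h, sub_zero, norm_one] at hq; exact lt_irrefl _ hq
  have hnq : ‖q‖ = 1 := aux_norm_one hq
  have hinv : ‖(1:ℚ_[p]) - q⁻¹‖ < 1 := by
    have h : (1:ℚ_[p]) - q⁻¹ = (q - 1) * q⁻¹ := by field_simp
    rw [h, norm_mul, norm_inv, hnq, inv_one, mul_one, norm_sub_rev]
    exact hq
  have hinv' : ∀ m : ℕ, 1 ≤ m → (q⁻¹) ^ m ≠ 1 := by
    intro m hm h
    rw [inv_pow, inv_eq_one] at h
    exact hq' m hm h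
  have e1 : I1 = ∑ k ∈ Finset.range (n + 1), auxC q⁻¹ (1 - x) n k * ((k : ℚ_[p]) + 1) :=
    aux_limit q⁻¹ hinv hinv' (1 - x) n I1 h1
  have e2 : I2 = ∑ k ∈ Finset.range (n + 1), auxC q x n k * ((k : ℚ_[p]) + 1) :=
    aux_limit q hq hq' x n I2 h2
  rw [e1, e2, Finset.mul_sum]
  refine Finset.sum_congr rfl fun k _ => ?_
  have hq1 : q ≠ 1 := fun h => hq' 1 le_rfl (by rw [h, one_pow])
  have h1q : (1:ℚ_[p]) - q ≠ 0 := sub_ne_zero.mpr (Ne.symm hq1)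
  have hk1 : q ^ (k + 1) - 1 ≠ 0 := sub_ne_zero.mpr (hq' (k+1) (Nat.succ_le_succ (Nat.zero_le _)))
  have hzB : q ^ (x * (k:ℤ)) ≠ 0 := zpow_ne_zero _ hq0
  have hA : (q⁻¹) ^ ((1 - x) * (k:ℤ)) = q ^ (x * (k:ℤ)) / q ^ (k:ℕ) := by
    rw [inv_zpow, ← zpow_neg]
    have h : -((1 - x) * (k:ℤ)) = x * k + (-(k:ℤ)) := by ring
    rw [h, zpow_add₀ hq0, zpow_neg, zpow_natCast, div_eq_mul_inv]
  have hB : ((1:ℚ_[p]) - q⁻¹) = (q - 1) / q := by field_simp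
  have hC : (q⁻¹) ^ (k+1) - 1 = (1 - q ^ (k+1)) / q ^ (k+1) := by
    rw [inv_pow]
    field_simp
  unfold auxC
  rw [hA, hB, hC]
  have hk0 : (q : ℚ_[p]) ^ (k+1) ≠ 0 := pow_ne_zero _ hq0
  have hkk : (q : ℚ_[p]) ^ k ≠ 0 := pow_ne_zero _ hq0
  have hq1' : q - 1 ≠ 0 := sub_ne_zero.mpr hq1
  have h1k : (1:ℚ_[p]) - q ^ (k+1) ≠ 0 := by
    intro h
    apply hk1
    rw [sub_eq_zero] at h ⊢
    exact h.symm
  rw [div_pow]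
  rw [show ((1:ℚ_[p]) - q) ^ n = (-1:ℚ_[p]) ^ n * (q - 1) ^ n by
    rw [← mul_pow]; congr 1; ring]
  field_simp
  ring
end

section
/- The Carlitz q-Bernoulli polynomials satisfy the reflection formula beta_{n,q^{-1}}(1-x) = (-1)^n q^n beta_{n,q}(x) for all n >= 0. -/
open Filter Finset

section Aux

variable {p : ℕ} [Fact p.Prime]

lemma norm_q_eq_one {q : ℚ_[p]} (hq : ‖1 - q‖ < 1) : ‖q‖ = 1 := by
  have h1 : q = 1 + -(1 - q) := by ring
  rw [h1, Padic.add_eq_max_of_ne]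
  · simp [norm_neg]; exact le_of_lt (by rw [norm_sub_rev]; exact hq)
  · simp only [norm_one, norm_neg]; exact fun h => absurd hq (by rw [← h]; exact lt_irrefl _)

lemma q_ne_zero {q : ℚ_[p]} (hq : ‖1 - q‖ < 1) : q ≠ 0 := by
  intro h
  have := norm_q_eq_one hq
  rw [h] at this; simp at this

lemma norm_pow_sub_one_le {q : ℚ_[p]} (hq : ‖q‖ ≤ 1) (i : ℕ) : ‖q ^ i - 1‖ ≤ ‖q - 1‖ := by
  have h : q ^ i - 1 = (∑ j ∈ range i, q ^ j) * (q - 1) := by rw [geom_sum_mul]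
  rw [h, norm_mul]
  have hs : ‖∑ j ∈ range i, q ^ j‖ ≤ 1 := by
    apply IsUltrametricDist.norm_sum_le_of_forall_le_of_nonneg zero_le_one
    intro j _
    calc ‖q ^ j‖ = ‖q‖ ^ j := norm_pow _ _
    _ ≤ 1 := pow_le_one₀ (norm_nonneg q) hq
  calc ‖∑ j ∈ range i, q ^ j‖ * ‖q - 1‖ ≤ 1 * ‖q - 1‖ :=
        mul_le_mul_of_nonneg_right hs (norm_nonneg _)
    _ = ‖q - 1‖ := one_mul _

lemma eq_one_of_pow_coprime {q : ℚ_[p]} (hq : ‖1 - q‖ < 1) {m : ℕ} (hm : ¬ p ∣ m)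
    (h : q ^ m = 1) : q = 1 := by
  have hq1 : ‖q‖ ≤ 1 := le_of_eq (norm_q_eq_one hq)
  have hgs : (∑ j ∈ range m, q ^ j) * (q - 1) = 0 := by rw [geom_sum_mul, h, sub_self]
  have hnm : ‖(m : ℚ_[p])‖ = 1 := by
    have h1 : ¬ ‖((m : ℤ) : ℚ_[p])‖ < 1 := by
      rw [Padic.norm_intCast_lt_one_iff]
      exact_mod_cast hm
    have h2 := Padic.norm_int_le_one (p := p) (m : ℤ)
    push_cast at h1 h2 ⊢
    linarith [lt_or_eq_of_le h2, not_lt.mp h1]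
  have hdiff : ‖(∑ j ∈ range m, q ^ j) - m‖ < 1 := by
    have : (∑ j ∈ range m, q ^ j) - m = ∑ j ∈ range m, (q ^ j - 1) := by
      rw [Finset.sum_sub_distrib]; simp
    rw [this]
    calc ‖∑ j ∈ range m, (q ^ j - 1)‖ ≤ ‖q - 1‖ := by
          apply IsUltrametricDist.norm_sum_le_of_forall_le_of_nonneg (norm_nonneg _)
          exact fun j _ => norm_pow_sub_one_le hq1 j
      _ < 1 := by rw [norm_sub_rev]; exact hq
  have hsum : ‖∑ j ∈ range m, q ^ j‖ = 1 := by
    have : (∑ j ∈ range m, q ^ j) = (m : ℚ_[p]) + ((∑ j ∈ range m, q ^ j) - m) := by ring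
    rw [this, Padic.add_eq_max_of_ne (by rw [hnm]; exact ne_of_gt hdiff), hnm]
    simp [le_of_lt hdiff]
  have : (q - 1) = 0 := by
    rcases mul_eq_zero.mp hgs with h1 | h1
    · exact absurd h1 (by intro h2; rw [h2] at hsum; simp at hsum)
    · exact h1
  exact sub_eq_zero.mp this

lemma exists_pow_p_eq_one {q : ℚ_[p]} (hq : ‖1 - q‖ < 1) {m : ℕ} (hm0 : m ≠ 0) (h : q ^ m = 1) :
    ∃ a : ℕ, q ^ (p ^ a) = 1 := by
  induction m using Nat.strong_induction_on generalizing q with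
  | _ m ih =>
    by_cases hd : p ∣ m
    · obtain ⟨m', rfl⟩ := hd
      have hm' : m' ≠ 0 := by rintro rfl; simp at hm0
      have hqp : ‖1 - q ^ p‖ < 1 := by
        rw [norm_sub_rev] at hq ⊢
        exact lt_of_le_of_lt (norm_pow_sub_one_le
          (le_of_eq (norm_q_eq_one (by rwa [norm_sub_rev] at hq))) p) hq
      have hlt : m' < p * m' := by
        have hp2 : 2 ≤ p := (Fact.out : p.Prime).two_le
        calc m' = 1 * m' := (one_mul m').symm
        _ < p * m' := by
          exact (Nat.mul_lt_mul_right (Nat.pos_of_ne_zero hm')).mpr (by omega)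
      obtain ⟨a, ha⟩ := ih m' hlt hqp hm' (by rw [← pow_mul]; exact h)
      exact ⟨a + 1, by rw [pow_succ', pow_mul]; exact ha⟩
    · exact ⟨0, by simp [eq_one_of_pow_coprime hq hd h]⟩

lemma step_bound {z : ℚ_[p]} (hz : ‖z‖ ≤ 1) :
    ‖z ^ p - 1‖ ≤ max ‖(p : ℚ_[p])‖ ‖z - 1‖ * ‖z - 1‖ := by
  have h : z ^ p - 1 = (∑ j ∈ range p, z ^ j) * (z - 1) := by rw [geom_sum_mul]
  rw [h, norm_mul]
  apply mul_le_mul_of_nonneg_right _ (norm_nonneg _)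
  have hsplit : (∑ j ∈ range p, z ^ j) = (p : ℚ_[p]) + ∑ j ∈ range p, (z ^ j - 1) := by
    rw [Finset.sum_sub_distrib]; simp
  rw [hsplit]
  calc ‖(p : ℚ_[p]) + ∑ j ∈ range p, (z ^ j - 1)‖
      ≤ max ‖(p : ℚ_[p])‖ ‖∑ j ∈ range p, (z ^ j - 1)‖ := Padic.nonarchimedean _ _
    _ ≤ max ‖(p : ℚ_[p])‖ ‖z - 1‖ := by
        apply max_le_max le_rfl
        apply IsUltrametricDist.norm_sum_le_of_forall_le_of_nonneg (norm_nonneg _)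
        exact fun j _ => norm_pow_sub_one_le hz j

lemma tendsto_pow_pow_p {q : ℚ_[p]} (hq : ‖1 - q‖ < 1) :
    Tendsto (fun N : ℕ => q ^ (p ^ N)) atTop (nhds 1) := by
  set c : ℝ := max ‖(p : ℚ_[p])‖ ‖1 - q‖ with hc
  have hc1 : c < 1 := max_lt (Padic.norm_p_lt_one) hq
  have hc0 : 0 ≤ c := le_max_of_le_left (norm_nonneg _)
  have hq1 : ‖q‖ ≤ 1 := le_of_eq (norm_q_eq_one hq)
  have key : ∀ N : ℕ, ‖q ^ (p ^ N) - 1‖ ≤ c ^ N * ‖1 - q‖ := by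
    intro N
    induction N with
    | zero => simp [norm_sub_rev]
    | succ N ihN =>
      have hzn : ‖q ^ (p ^ N)‖ ≤ 1 := by
        rw [norm_pow]; exact pow_le_one₀ (norm_nonneg _) hq1
      have h1 : ‖(q ^ (p ^ N)) ^ p - 1‖ ≤
          max ‖(p : ℚ_[p])‖ ‖q ^ (p ^ N) - 1‖ * ‖q ^ (p ^ N) - 1‖ := step_bound hzn
      have h2 : max ‖(p : ℚ_[p])‖ ‖q ^ (p ^ N) - 1‖ ≤ c := by
        apply max_le (le_max_left _ _)
        calc ‖q ^ (p ^ N) - 1‖ ≤ c ^ N * ‖1 - q‖ := ihN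
          _ ≤ 1 * ‖1 - q‖ := by
            apply mul_le_mul_of_nonneg_right (pow_le_one₀ hc0 (le_of_lt hc1)) (norm_nonneg _)
          _ = ‖1 - q‖ := one_mul _
          _ ≤ c := le_max_right _ _
      calc ‖q ^ (p ^ (N + 1)) - 1‖ = ‖(q ^ (p ^ N)) ^ p - 1‖ := by rw [← pow_mul, ← pow_succ]
        _ ≤ max ‖(p : ℚ_[p])‖ ‖q ^ (p ^ N) - 1‖ * ‖q ^ (p ^ N) - 1‖ := h1
        _ ≤ c * (c ^ N * ‖1 - q‖) := by
            apply mul_le_mul h2 ihN (norm_nonneg _) hc0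
        _ = c ^ (N + 1) * ‖1 - q‖ := by ring
  rw [tendsto_iff_norm_sub_tendsto_zero]
  apply squeeze_zero (fun N => norm_nonneg _) key
  have := (tendsto_pow_atTop_nhds_zero_of_lt_one hc0 hc1).mul_const ‖1 - q‖
  simpa using this

end Aux

/-- Closed form of the Carlitz q-Bernoulli polynomial, as a polynomial in `t`;
the value of the integral is obtained at `t = 1`. -/
noncomputable def carlitzF (p : ℕ) [Fact p.Prime] (q : ℚ_[p]) (x : ℤ) (n : ℕ) (t : ℚ_[p]) :
    ℚ_[p] :=
  ((1 - q) / (1 - q) ^ n) *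
    ∑ k ∈ range (n + 1),
      (n.choose k : ℚ_[p]) * (-(q ^ x)) ^ k * (∑ j ∈ range (k + 1), t ^ j) / (1 - q ^ (k + 1))

section Main

variable {p : ℕ} [Fact p.Prime]

lemma SN_eq {q : ℚ_[p]} (hq0 : q ≠ 0) (hroots : ∀ m : ℕ, m ≠ 0 → q ^ m ≠ 1)
    (x : ℤ) (n : ℕ) {P : ℕ} (hP : P ≠ 0) :
    (∑ y ∈ range P, (qNumZ p q (x + y)) ^ n * q ^ y) / qNumZ p q (P : ℤ) =
      carlitzF p q x n (q ^ P) := by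
  have hq1 : (1 : ℚ_[p]) - q ≠ 0 := by
    have := hroots 1 one_ne_zero; rw [pow_one] at this
    exact sub_ne_zero.mpr (fun h => this h.symm)
  have hk1 : ∀ k : ℕ, q ^ (k + 1) - 1 ≠ 0 := fun k =>
    sub_ne_zero.mpr (hroots (k + 1) (Nat.succ_ne_zero k))
  have ht1 : q ^ P - 1 ≠ 0 := sub_ne_zero.mpr (hroots P hP)
  have hnum : (∑ y ∈ range P, (1 - q ^ x * q ^ y) ^ n * q ^ y) =
      ∑ k ∈ range (n + 1),
        (n.choose k : ℚ_[p]) * (-(q ^ x)) ^ k * (((q ^ P) ^ (k + 1) - 1) / (q ^ (k + 1) - 1)) := by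
    have expand : ∀ y : ℕ, (1 - q ^ x * q ^ y) ^ n * q ^ y =
        ∑ k ∈ range (n + 1), (n.choose k : ℚ_[p]) * (-(q ^ x)) ^ k * (q ^ (k + 1)) ^ y := by
      intro y
      have : (1 - q ^ x * q ^ y) = (-(q ^ x) * q ^ y) + 1 := by ring
      rw [this, add_pow, Finset.sum_mul]
      apply Finset.sum_congr rfl
      intro k _
      rw [mul_pow, one_pow]
      rw [show (q ^ (k + 1) : ℚ_[p]) ^ y = (q ^ y) ^ (k+1) by rw [← pow_mul, ← pow_mul, mul_comm]]
      ring
    rw [Finset.sum_congr rfl (fun y _ => expand y), Finset.sum_comm]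
    apply Finset.sum_congr rfl
    intro k _
    rw [← Finset.mul_sum, geom_sum_eq (hroots (k+1) (Nat.succ_ne_zero k)) P,
      ← pow_mul, ← pow_mul, mul_comm (k+1) P]
  have hterm : ∀ y : ℕ, (qNumZ p q (x + y)) ^ n = (1 - q ^ x * q ^ y) ^ n / (1 - q) ^ n := by
    intro y
    rw [qNumZ, zpow_add₀ hq0, zpow_natCast, div_pow]
  have hden : qNumZ p q (P : ℤ) = (1 - q ^ P) / (1 - q) := by
    rw [qNumZ, zpow_natCast]
  have hP1 : (1 : ℚ_[p]) - q ^ P ≠ 0 := sub_ne_zero.mpr (Ne.symm (hroots P hP))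
  have hk1' : ∀ k : ℕ, (1 : ℚ_[p]) - q ^ (k + 1) ≠ 0 := fun k =>
    sub_ne_zero.mpr (Ne.symm (hroots (k + 1) (Nat.succ_ne_zero k)))
  calc (∑ y ∈ range P, (qNumZ p q (x + y)) ^ n * q ^ y) / qNumZ p q (P : ℤ)
      = (∑ y ∈ range P, (1 - q ^ x * q ^ y) ^ n * q ^ y) / (1 - q) ^ n /
          ((1 - q ^ P) / (1 - q)) := by
        rw [hden]
        congr 1
        rw [Finset.sum_div]
        apply Finset.sum_congr rfl
        intro y _
        rw [hterm y]; ring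
    _ = carlitzF p q x n (q ^ P) := by
        rw [hnum, carlitzF, Finset.sum_div, Finset.sum_div, Finset.mul_sum]
        apply Finset.sum_congr rfl
        intro k _
        rw [geom_sum_eq (hroots P hP) (k + 1)]
        have h1 : ((1 : ℚ_[p]) - q) ^ n ≠ 0 := pow_ne_zero _ hq1
        field_simp
        rw [div_eq_div_iff (hk1 k) (hk1' k)]
        ring

lemma carlitzF_continuous (q : ℚ_[p]) (x : ℤ) (n : ℕ) : Continuous (carlitzF p q x n) := by
  unfold carlitzF
  apply continuous_const.mul
  apply continuous_finset_sum
  intro k _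
  apply Continuous.div_const
  exact continuous_const.mul (continuous_finset_sum _ fun j _ => continuous_pow j)

lemma integral_eq_carlitzF {q : ℚ_[p]} (hq : ‖1 - q‖ < 1) (hq0 : q ≠ 0)
    (hroots : ∀ m : ℕ, m ≠ 0 → q ^ m ≠ 1) (x : ℤ) (n : ℕ) :
    IsPadicQIntegral p q (fun y : ℕ => (qNumZ p q (x + y)) ^ n) (carlitzF p q x n 1) := by
  unfold IsPadicQIntegral
  have h1 : Tendsto (fun N : ℕ => carlitzF p q x n (q ^ (p ^ N))) atTop
      (nhds (carlitzF p q x n 1)) :=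
    ((carlitzF_continuous q x n).tendsto 1).comp (tendsto_pow_pow_p hq)
  apply h1.congr
  intro N
  have hPN : (p : ℤ) ^ N = ((p ^ N : ℕ) : ℤ) := by push_cast; ring
  rw [hPN, ← SN_eq hq0 hroots x n (pow_ne_zero N (Fact.out : p.Prime).ne_zero)]

lemma carlitzF_reflect {q : ℚ_[p]} (hq0 : q ≠ 0) (hroots : ∀ m : ℕ, m ≠ 0 → q ^ m ≠ 1)
    (x : ℤ) (n : ℕ) :
    carlitzF p q⁻¹ (1 - x) n 1 = (-1 : ℚ_[p]) ^ n * q ^ n * carlitzF p q x n 1 := by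
  have hq1 : (1 : ℚ_[p]) - q ≠ 0 := by
    have := hroots 1 one_ne_zero; rw [pow_one] at this
    exact sub_ne_zero.mpr (fun h => this h.symm)
  have hqi1 : (1 : ℚ_[p]) - q⁻¹ ≠ 0 := by
    rw [sub_ne_zero]
    intro h
    exact hroots 1 one_ne_zero (by rw [pow_one]; exact inv_eq_one.mp h.symm)
  unfold carlitzF
  rw [← mul_assoc, Finset.mul_sum, Finset.mul_sum]
  apply Finset.sum_congr rfl
  intro k _
  have hk : (1 : ℚ_[p]) - q ^ (k + 1) ≠ 0 :=
    sub_ne_zero.mpr (Ne.symm (hroots (k + 1) (Nat.succ_ne_zero k)))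
  have hki : (1 : ℚ_[p]) - (q ^ (k + 1))⁻¹ ≠ 0 := by
    rw [sub_ne_zero]
    intro h
    exact hroots (k + 1) (Nat.succ_ne_zero k) (inv_eq_one.mp h.symm)
  have hx : (q⁻¹) ^ ((1 : ℤ) - x) = q ^ x / q := by
    rw [inv_zpow, ← zpow_neg, neg_sub, zpow_sub₀ hq0, zpow_one]
  have ha : q ^ x ≠ 0 := zpow_ne_zero x hq0
  rw [hx, inv_pow]
  generalize (∑ j ∈ range (k + 1), (1:ℚ_[p]) ^ j) = s
  set a := q ^ x with ha'
  have hqk : q ^ (k+1) ≠ 0 := pow_ne_zero _ hq0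
  have hnq : (-q : ℚ_[p]) ≠ 0 := neg_ne_zero.mpr hq0
  have f1 : (1:ℚ_[p]) - q⁻¹ = (1 - q) * (-q)⁻¹ := by field_simp; ring
  have f2 : ((1:ℚ_[p]) - q⁻¹) ^ n = (1 - q) ^ n * ((-q) ^ n)⁻¹ := by
    rw [f1, mul_pow, inv_pow]
  have f3 : (1:ℚ_[p]) - (q ^ (k+1))⁻¹ = (1 - q ^ (k+1)) * (-(q ^ (k+1)))⁻¹ := by
    field_simp; ring
  have f4 : -(a / q) = -a / q := (neg_div q a).symm
  rw [f2, f1, f3, f4, div_pow, ← neg_pow]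
  have hcn : ((-q : ℚ_[p]) ^ n) ≠ 0 := pow_ne_zero _ hnq
  have hun : ((1 : ℚ_[p]) - q) ^ n ≠ 0 := pow_ne_zero _ hq1
  have hqkk : (q : ℚ_[p]) ^ k ≠ 0 := pow_ne_zero _ hq0
  rw [pow_succ] at hk ⊢
  generalize hb : (q : ℚ_[p]) ^ k = b at *
  generalize hv : (1 : ℚ_[p]) - b * q = v at *
  generalize hd : (-a : ℚ_[p]) ^ k = d at *
  generalize hc : (-q : ℚ_[p]) ^ n = c at *
  generalize hu : ((1 : ℚ_[p]) - q) ^ n = u at *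
  field_simp

lemma integral_zero_of_root {q : ℚ_[p]} {a : ℕ} (ha : q ^ (p ^ a) = 1)
    {f : ℕ → ℚ_[p]} {I : ℚ_[p]} (hI : IsPadicQIntegral p q f I) : I = 0 := by
  refine tendsto_nhds_unique hI ?_
  refine Tendsto.congr' ?_ (tendsto_const_nhds (x := (0 : ℚ_[p])) (f := atTop (α := ℕ)))
  filter_upwards [eventually_ge_atTop a] with N hN
  show (0 : ℚ_[p]) = _
  have hqN : q ^ (p ^ N) = 1 := by
    have : p ^ N = p ^ a * p ^ (N - a) := by rw [← pow_add]; congr 1; omega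
    rw [this, pow_mul, ha, one_pow]
  have : qNumZ p q ((p : ℤ) ^ N) = 0 := by
    rw [qNumZ]
    have : (q : ℚ_[p]) ^ ((p : ℤ) ^ N) = q ^ (p ^ N) := by
      rw [show ((p : ℤ) ^ N) = ((p ^ N : ℕ) : ℤ) by push_cast; ring, zpow_natCast]
    rw [this, hqN, sub_self, zero_div]
  rw [this, div_zero]

end Main

/-- Reflection formula for Carlitz q-Bernoulli polynomials:
`β_{n,q⁻¹}(1-x) = (-1)^n q^n β_{n,q}(x)`, where the polynomials are given by
the bosonic p-adic q-integral `β_{n,q}(x) = ∫_{ℤ_p} [x+y]_q^n dμ_q(y)`. -/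
theorem carlitz_qBernoulli_reflection (p : ℕ) [Fact p.Prime] (q : ℚ_[p])
    (hq : ‖1 - q‖ < 1) (x : ℤ) (n : ℕ) (B Brefl : ℚ_[p])
    (hB : IsPadicQIntegral p q (fun y : ℕ => (qNumZ p q (x + y)) ^ n) B)
    (hBrefl : IsPadicQIntegral p q⁻¹ (fun y : ℕ => (qNumZ p q⁻¹ ((1 - x) + y)) ^ n) Brefl) :
    Brefl = (-1 : ℚ_[p]) ^ n * q ^ n * B := by
  have hq0 : q ≠ 0 := q_ne_zero hq
  by_cases hroot : ∃ m : ℕ, m ≠ 0 ∧ q ^ m = 1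
  · obtain ⟨m, hm0, hm⟩ := hroot
    obtain ⟨a, ha⟩ := exists_pow_p_eq_one hq hm0 hm
    have hB0 : B = 0 := integral_zero_of_root ha hB
    have hai : (q⁻¹) ^ (p ^ a) = 1 := by rw [inv_pow, ha, inv_one]
    have hBr0 : Brefl = 0 := integral_zero_of_root hai hBrefl
    rw [hB0, hBr0, mul_zero]
  · push_neg at hroot
    have hroots : ∀ m : ℕ, m ≠ 0 → q ^ m ≠ 1 := hroot
    have hqinv : ‖1 - q⁻¹‖ < 1 := by
      have h1 : (1 : ℚ_[p]) - q⁻¹ = (q - 1) * q⁻¹ := by field_simp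
      rw [h1, norm_mul, norm_inv, norm_q_eq_one hq, inv_one, mul_one, norm_sub_rev]
      exact hq
    have hqi0 : q⁻¹ ≠ 0 := inv_ne_zero hq0
    have hrootsi : ∀ m : ℕ, m ≠ 0 → (q⁻¹) ^ m ≠ 1 := by
      intro m hm h
      rw [inv_pow] at h
      exact hroots m hm (inv_eq_one.mp h)
    have hBv : B = carlitzF p q x n 1 :=
      tendsto_nhds_unique hB (integral_eq_carlitzF hq hq0 hroots x n)
    have hBrv : Brefl = carlitzF p q⁻¹ (1 - x) n 1 :=
      tendsto_nhds_unique hBrefl (integral_eq_carlitzF hqinv hqi0 hrootsi (1 - x) n)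
    rw [hBv, hBrv, carlitzF_reflect hq0 hroots x n]
end
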